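/- arXiv:2101.06725 — 12 statements merged into one kernel-verified Lean document; each statement's English description precedes it below -/
import Mathlib

section
/- Let T be a bounded linear operator on a complex Hilbert space H with closed range. If there exists a bijective bounded operator P on H with T* = P T, then T is EP (range T = range T*). -/
open ContinuousLinearMap in
lemma orth_range_eq_ker_adjoint {H : Type*} [NormedAddCommGroup H]
    [InnerProductSpace ℂ H] [CompleteSpace H] (S : H →L[ℂ] H) :
    (LinearMap.range (S : H →ₗ[ℂ] H))ᗮ = LinearMap.ker ((adjoint S : H →L[ℂ] H) : H →ₗ[ℂ] H) := by
  ext y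
  simp only [Submodule.mem_orthogonal, LinearMap.mem_ker]
  constructor
  · intro h
    have key : ∀ x : H, inner ℂ (adjoint S y) x = (0 : ℂ) := by
      intro x
      rw [adjoint_inner_left, ← inner_conj_symm, h (S x) ⟨x, rfl⟩, map_zero]
    have := key (adjoint S y)
    exact inner_self_eq_zero.mp this
  · intro h u hu
    obtain ⟨x, rfl⟩ := hu
    rw [← inner_conj_symm, ContinuousLinearMap.coe_coe, ← adjoint_inner_left, (show adjoint S y = 0 from h), inner_zero_left, map_zero]

/-- If there is a bijective bounded operator `P` (with bounded
inverse) such that `T* = P T`, then `T` is EP. -/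
theorem stmt_3 {H : Type*} [NormedAddCommGroup H] [InnerProductSpace ℂ H]
    [CompleteSpace H] (T : H →L[ℂ] H)
    (hclosed : IsClosed (LinearMap.range (T : H →ₗ[ℂ] H) : Set H))
    (hP : ∃ P : H ≃L[ℂ] H,
      ContinuousLinearMap.adjoint T = (P : H →L[ℂ] H) ∘L T) :
    LinearMap.range (T : H →ₗ[ℂ] H) = LinearMap.range ((ContinuousLinearMap.adjoint T : H →L[ℂ] H) : H →ₗ[ℂ] H) := by
  obtain ⟨P, hPT⟩ := hP
  -- ker (adjoint T) = ker T
  have hker : LinearMap.ker ((ContinuousLinearMap.adjoint T : H →L[ℂ] H) : H →ₗ[ℂ] H) = LinearMap.ker (T : H →ₗ[ℂ] H) := by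
    ext x
    simp only [LinearMap.mem_ker, hPT, ContinuousLinearMap.comp_apply]
    constructor
    · intro h
      have := congrArg P.symm h
      simpa using this
    · intro h; have h' : T x = 0 := h; simp [h']
  -- range (adjoint T) is closed
  have hclosed' : IsClosed (LinearMap.range ((ContinuousLinearMap.adjoint T : H →L[ℂ] H) : H →ₗ[ℂ] H) : Set H) := by
    have : (LinearMap.range ((ContinuousLinearMap.adjoint T : H →L[ℂ] H) : H →ₗ[ℂ] H) : Set H)
        = P '' (LinearMap.range (T : H →ₗ[ℂ] H) : Set H) := by
      ext y
      simp only [SetLike.mem_coe, LinearMap.mem_range, hPT,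
        ContinuousLinearMap.comp_apply, Set.mem_image]
      constructor
      · rintro ⟨x, rfl⟩; exact ⟨T x, ⟨x, rfl⟩, rfl⟩
      · rintro ⟨z, ⟨x, rfl⟩, rfl⟩; exact ⟨x, rfl⟩
    rw [this]
    exact P.toHomeomorph.isClosedMap _ hclosed
  -- both ranges have orthogonal complement ker T
  have h1 : (LinearMap.range (T : H →ₗ[ℂ] H))ᗮ = LinearMap.ker (T : H →ₗ[ℂ] H) := by
    rw [orth_range_eq_ker_adjoint, hker]
  have h2 : (LinearMap.range ((ContinuousLinearMap.adjoint T : H →L[ℂ] H) : H →ₗ[ℂ] H))ᗮ = LinearMap.ker (T : H →ₗ[ℂ] H) := by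
    rw [orth_range_eq_ker_adjoint, ContinuousLinearMap.adjoint_adjoint]
  have c1 : CompleteSpace (LinearMap.range (T : H →ₗ[ℂ] H)) := hclosed.completeSpace_coe
  have c2 : CompleteSpace (LinearMap.range ((ContinuousLinearMap.adjoint T : H →L[ℂ] H) : H →ₗ[ℂ] H)) :=
    hclosed'.completeSpace_coe
  calc LinearMap.range (T : H →ₗ[ℂ] H) = (LinearMap.range (T : H →ₗ[ℂ] H))ᗮᗮ :=
        (Submodule.orthogonal_orthogonal _).symm
    _ = (LinearMap.range ((ContinuousLinearMap.adjoint T : H →L[ℂ] H) : H →ₗ[ℂ] H))ᗮᗮ := by rw [h1, h2]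
    _ = LinearMap.range ((ContinuousLinearMap.adjoint T : H →L[ℂ] H) : H →ₗ[ℂ] H) :=
        Submodule.orthogonal_orthogonal _
end

section
/- Let T be an EP operator on a complex Hilbert space H and A a bounded operator on H. If A T = T A, then A T† = T† A. -/
/-- If `T` is an EP operator (with Moore-Penrose inverse `Tdag` and
`T T† = T† T`) and `A T = T A`, then `A T† = T† A`. -/
theorem stmt_8 {H : Type*} [NormedAddCommGroup H] [InnerProductSpace ℂ H]
    [CompleteSpace H] (T Tdag A : H →L[ℂ] H)
    (h1 : T ∘L Tdag ∘L T = T) (h2 : Tdag ∘L T ∘L Tdag = Tdag)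
    (h3 : ContinuousLinearMap.adjoint (T ∘L Tdag) = T ∘L Tdag)
    (h4 : ContinuousLinearMap.adjoint (Tdag ∘L T) = Tdag ∘L T)
    (hEP : T ∘L Tdag = Tdag ∘L T)
    (hc : A ∘L T = T ∘L A) :
    A ∘L Tdag = Tdag ∘L A := by
  have h1' : T * (Tdag * T) = T := h1
  have h2' : Tdag * (T * Tdag) = Tdag := h2
  have hEP' : T * Tdag = Tdag * T := hEP
  have hc' : A * T = T * A := hc
  -- Q = T * Tdag is the common projection; A commutes with Q
  have e1 : (T * Tdag) * (A * (T * Tdag)) = A * (T * Tdag) := by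
    calc (T * Tdag) * (A * (T * Tdag))
        = T * Tdag * (A * T) * Tdag := by noncomm_ring
      _ = T * Tdag * (T * A) * Tdag := by rw [hc']
      _ = (T * (Tdag * T)) * (A * Tdag) := by noncomm_ring
      _ = T * (A * Tdag) := by rw [h1']
      _ = (T * A) * Tdag := by noncomm_ring
      _ = (A * T) * Tdag := by rw [hc']
      _ = A * (T * Tdag) := by noncomm_ring
  have e2 : (Tdag * T) * A * (Tdag * T) = (Tdag * T) * A := by
    calc (Tdag * T) * A * (Tdag * T)
        = Tdag * (T * A) * (Tdag * T) := by noncomm_ring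
      _ = Tdag * (A * T) * (Tdag * T) := by rw [hc']
      _ = (Tdag * A) * (T * (Tdag * T)) := by noncomm_ring
      _ = (Tdag * A) * T := by rw [h1']
      _ = Tdag * (A * T) := by noncomm_ring
      _ = Tdag * (T * A) := by rw [hc']
      _ = (Tdag * T) * A := by noncomm_ring
  have hcomm : A * (T * Tdag) = (T * Tdag) * A := by
    calc A * (T * Tdag) = (T * Tdag) * (A * (T * Tdag)) := e1.symm
      _ = (Tdag * T) * A * (Tdag * T) := by rw [hEP']; noncomm_ring
      _ = (Tdag * T) * A := e2
      _ = (T * Tdag) * A := by rw [hEP']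
  show A * Tdag = Tdag * A
  calc A * Tdag = A * (Tdag * (T * Tdag)) := by rw [h2']
    _ = (A * (T * Tdag)) * Tdag := by
          have hq : Tdag * (T * Tdag) = (T * Tdag) * Tdag := by
            conv_rhs => rw [hEP']
            rw [← mul_assoc]
          rw [hq]; noncomm_ring
    _ = ((T * Tdag) * A) * Tdag := by rw [hcomm]
    _ = Tdag * (T * A) * Tdag := by rw [hEP']; noncomm_ring
    _ = Tdag * (A * T) * Tdag := by rw [hc']
    _ = Tdag * (A * (T * Tdag)) := by noncomm_ring
    _ = Tdag * ((T * Tdag) * A) := by rw [hcomm]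
    _ = (Tdag * (T * Tdag)) * A := by noncomm_ring
    _ = Tdag * A := by rw [h2']
end

section
/- Let T be an EP operator on a complex Hilbert space H and A a bounded operator on H. If A T = T A and A T* T = T* T A, then A T* = T* A. -/
/-- If `T` is EP, `A T = T A` and `A T* T = T* T A`, then
`A T* = T* A`. -/
theorem stmt_9 {H : Type*} [NormedAddCommGroup H] [InnerProductSpace ℂ H]
    [CompleteSpace H] (T Tdag A : H →L[ℂ] H)
    (h1 : T ∘L Tdag ∘L T = T) (h2 : Tdag ∘L T ∘L Tdag = Tdag)
    (h3 : ContinuousLinearMap.adjoint (T ∘L Tdag) = T ∘L Tdag)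
    (h4 : ContinuousLinearMap.adjoint (Tdag ∘L T) = Tdag ∘L T)
    (hEP : T ∘L Tdag = Tdag ∘L T)
    (hc : A ∘L T = T ∘L A)
    (hc2 : A ∘L (ContinuousLinearMap.adjoint T ∘L T)
         = (ContinuousLinearMap.adjoint T ∘L T) ∘L A) :
    A ∘L ContinuousLinearMap.adjoint T = ContinuousLinearMap.adjoint T ∘L A := by
  set Ts := ContinuousLinearMap.adjoint T with hTs
  -- restate hypotheses multiplicatively
  have h1' : T * (Tdag * T) = T := h1
  have hc' : A * T = T * A := hc
  have hc2' : A * (Ts * T) = (Ts * T) * A := hc2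
  have hEP' : T * Tdag = Tdag * T := hEP
  -- Ts * (T * Tdag) = Ts
  have ha : Ts * (T * Tdag) = Ts := by
    have : (T ∘L Tdag) ∘L T = T := by rw [ContinuousLinearMap.comp_assoc]; exact h1
    calc Ts * (T * Tdag) = Ts ∘L (T ∘L Tdag) := rfl
      _ = ContinuousLinearMap.adjoint T ∘L ContinuousLinearMap.adjoint (T ∘L Tdag) := by
            rw [h3, hTs]
      _ = ContinuousLinearMap.adjoint ((T ∘L Tdag) ∘L T) := by
            rw [← ContinuousLinearMap.adjoint_comp]
      _ = Ts := by rw [this, hTs]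
  -- P A P = A P for P = T * Tdag
  have c1 : (T * Tdag) * (A * (T * Tdag)) = A * (T * Tdag) := by
    calc (T * Tdag) * (A * (T * Tdag))
        = (T * Tdag) * ((A * T) * Tdag) := by noncomm_ring
      _ = (T * Tdag) * ((T * A) * Tdag) := by rw [hc']
      _ = (T * (Tdag * T)) * (A * Tdag) := by noncomm_ring
      _ = T * (A * Tdag) := by rw [h1']
      _ = (T * A) * Tdag := by noncomm_ring
      _ = (A * T) * Tdag := by rw [← hc']
      _ = A * (T * Tdag) := by noncomm_ring
  -- P A = P A P
  have c2 : (T * Tdag) * A = (T * Tdag) * (A * (T * Tdag)) := by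
    calc (T * Tdag) * A = (Tdag * T) * A := by rw [hEP']
      _ = Tdag * (T * A) := by noncomm_ring
      _ = Tdag * (A * T) := by rw [← hc']
      _ = Tdag * (A * (T * (Tdag * T))) := by rw [h1']
      _ = (Tdag * (A * T)) * (Tdag * T) := by noncomm_ring
      _ = (Tdag * (T * A)) * (Tdag * T) := by rw [hc']
      _ = ((Tdag * T) * A) * (Tdag * T) := by noncomm_ring
      _ = ((T * Tdag) * A) * (T * Tdag) := by rw [hEP']
      _ = (T * Tdag) * (A * (T * Tdag)) := by noncomm_ring
  have hPA : (T * Tdag) * A = A * (T * Tdag) := c2.trans c1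
  show A * Ts = Ts * A
  calc A * Ts = A * (Ts * (T * Tdag)) := by rw [ha]
    _ = (A * (Ts * T)) * Tdag := by noncomm_ring
    _ = ((Ts * T) * A) * Tdag := by rw [hc2']
    _ = Ts * ((T * A) * Tdag) := by noncomm_ring
    _ = Ts * ((A * T) * Tdag) := by rw [hc']
    _ = Ts * (A * (T * Tdag)) := by noncomm_ring
    _ = Ts * ((T * Tdag) * A) := by rw [hPA]
    _ = (Ts * (T * Tdag)) * A := by noncomm_ring
    _ = Ts * A := by rw [ha]
end

section
/- Let T be an EP operator on a complex Hilbert space H and A a bounded operator on H. If A T = T A and A T† T* = T† T* A, then A T* = T* A. -/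
/-- If `T` is EP, `A T = T A` and `A T† T* = T† T* A`, then
`A T* = T* A`. -/
theorem stmt_10 {H : Type*} [NormedAddCommGroup H] [InnerProductSpace ℂ H]
    [CompleteSpace H] (T Tdag A : H →L[ℂ] H)
    (h1 : T ∘L Tdag ∘L T = T) (h2 : Tdag ∘L T ∘L Tdag = Tdag)
    (h3 : ContinuousLinearMap.adjoint (T ∘L Tdag) = T ∘L Tdag)
    (h4 : ContinuousLinearMap.adjoint (Tdag ∘L T) = Tdag ∘L T)
    (hEP : T ∘L Tdag = Tdag ∘L T)
    (hc : A ∘L T = T ∘L A)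
    (hc2 : A ∘L (Tdag ∘L ContinuousLinearMap.adjoint T)
         = (Tdag ∘L ContinuousLinearMap.adjoint T) ∘L A) :
    A ∘L ContinuousLinearMap.adjoint T = ContinuousLinearMap.adjoint T ∘L A := by
  have key : (T ∘L Tdag) ∘L ContinuousLinearMap.adjoint T = ContinuousLinearMap.adjoint T := by
    have := congrArg ContinuousLinearMap.adjoint h1
    rw [ContinuousLinearMap.adjoint_comp, h4] at this
    rw [hEP]
    exact this
  calc A ∘L ContinuousLinearMap.adjoint T
      = A ∘L ((T ∘L Tdag) ∘L ContinuousLinearMap.adjoint T) := by rw [key]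
    _ = (A ∘L T) ∘L (Tdag ∘L ContinuousLinearMap.adjoint T) := by
        simp only [ContinuousLinearMap.comp_assoc]
    _ = (T ∘L A) ∘L (Tdag ∘L ContinuousLinearMap.adjoint T) := by rw [hc]
    _ = T ∘L ((Tdag ∘L ContinuousLinearMap.adjoint T) ∘L A) := by
        rw [ContinuousLinearMap.comp_assoc, hc2]
    _ = ((T ∘L Tdag) ∘L ContinuousLinearMap.adjoint T) ∘L A := by
        simp only [ContinuousLinearMap.comp_assoc]
    _ = ContinuousLinearMap.adjoint T ∘L A := by rw [key]
end

section
/- Let T and S be EP operators on a complex Hilbert space H and A a bounded operator. If A T = S A and A T* T = S* S A, then A T* = S* A. -/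
/-- If `T, S` are EP, `A T = S A` and `A T* T = S* S A`, then
`A T* = S* A`. -/
theorem stmt_11 {H : Type*} [NormedAddCommGroup H] [InnerProductSpace ℂ H]
    [CompleteSpace H] (T Tdag S Sdag A : H →L[ℂ] H)
    (hT1 : T ∘L Tdag ∘L T = T) (hT2 : Tdag ∘L T ∘L Tdag = Tdag)
    (hT3 : ContinuousLinearMap.adjoint (T ∘L Tdag) = T ∘L Tdag)
    (hT4 : ContinuousLinearMap.adjoint (Tdag ∘L T) = Tdag ∘L T)
    (hTEP : T ∘L Tdag = Tdag ∘L T)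
    (hS1 : S ∘L Sdag ∘L S = S) (hS2 : Sdag ∘L S ∘L Sdag = Sdag)
    (hS3 : ContinuousLinearMap.adjoint (S ∘L Sdag) = S ∘L Sdag)
    (hS4 : ContinuousLinearMap.adjoint (Sdag ∘L S) = Sdag ∘L S)
    (hSEP : S ∘L Sdag = Sdag ∘L S)
    (hc : A ∘L T = S ∘L A)
    (hc2 : A ∘L (ContinuousLinearMap.adjoint T ∘L T)
         = (ContinuousLinearMap.adjoint S ∘L S) ∘L A) :
    A ∘L ContinuousLinearMap.adjoint T = ContinuousLinearMap.adjoint S ∘L A := by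
  have hcp : ∀ x, A (T x) = S (A x) := fun x => DFunLike.congr_fun hc x
  have hT1p : ∀ x, T (Tdag (T x)) = T x := fun x => DFunLike.congr_fun hT1 x
  have hS1p : ∀ x, S (Sdag (S x)) = S x := fun x => DFunLike.congr_fun hS1 x
  have hTEPp : ∀ x, T (Tdag x) = Tdag (T x) := fun x => DFunLike.congr_fun hTEP x
  have hSEPp : ∀ x, S (Sdag x) = Sdag (S x) := fun x => DFunLike.congr_fun hSEP x
  have hc2p : ∀ x, A (ContinuousLinearMap.adjoint T (T x))
      = ContinuousLinearMap.adjoint S (S (A x)) := fun x => DFunLike.congr_fun hc2 x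
  -- T* (T T†) = T*
  have eT : (T ∘L Tdag) ∘L T = T := by rw [ContinuousLinearMap.comp_assoc]; exact hT1
  have hTs := congrArg ContinuousLinearMap.adjoint eT
  rw [ContinuousLinearMap.adjoint_comp, hT3] at hTs
  have hTsp : ∀ x, ContinuousLinearMap.adjoint T (T (Tdag x))
      = ContinuousLinearMap.adjoint T x := fun x => DFunLike.congr_fun hTs x
  -- S* (S S†) = S*
  have eS : (S ∘L Sdag) ∘L S = S := by rw [ContinuousLinearMap.comp_assoc]; exact hS1
  have hSs := congrArg ContinuousLinearMap.adjoint eS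
  rw [ContinuousLinearMap.adjoint_comp, hS3] at hSs
  have hSsp : ∀ x, ContinuousLinearMap.adjoint S (S (Sdag x))
      = ContinuousLinearMap.adjoint S x := fun x => DFunLike.congr_fun hSs x
  -- key : A (T T†) = (S S†) A
  have key : ∀ x, A (T (Tdag x)) = S (Sdag (A x)) := by
    intro x
    have stepA : S (Sdag (A (T (Tdag x)))) = A (T (Tdag x)) := by
      rw [hcp (Tdag x), hS1p]
    have h1 : A (T x) = S (A (T (Tdag x))) := by
      calc A (T x) = A (T (Tdag (T x))) := by rw [hT1p]
        _ = A (T (T (Tdag x))) := by rw [← hTEPp]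
        _ = S (A (T (Tdag x))) := hcp _
    have stepB : S (Sdag (A x)) = S (Sdag (A (T (Tdag x)))) := by
      calc S (Sdag (A x)) = Sdag (S (A x)) := hSEPp _
        _ = Sdag (A (T x)) := by rw [hcp]
        _ = Sdag (S (A (T (Tdag x)))) := by rw [h1]
        _ = S (Sdag (A (T (Tdag x)))) := (hSEPp _).symm
    rw [stepB, stepA]
  ext x
  simp only [ContinuousLinearMap.comp_apply]
  calc A (ContinuousLinearMap.adjoint T x)
      = A (ContinuousLinearMap.adjoint T (T (Tdag x))) := by rw [hTsp]
    _ = ContinuousLinearMap.adjoint S (S (A (Tdag x))) := hc2p _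
    _ = ContinuousLinearMap.adjoint S (A (T (Tdag x))) := by rw [hcp]
    _ = ContinuousLinearMap.adjoint S (S (Sdag (A x))) := by rw [key]
    _ = ContinuousLinearMap.adjoint S (A x) := hSsp _
end

section
/- Let T and S be EP operators on a complex Hilbert space H and A a bounded operator. If A T = S A and A T† T* = S† S* A, then A T* = S* A. -/
open ContinuousLinearMap

/-- If `T, S` are EP, `A T = S A` and `A T† T* = S† S* A`, then
`A T* = S* A`. -/
theorem stmt_12 {H : Type*} [NormedAddCommGroup H] [InnerProductSpace ℂ H]
    [CompleteSpace H] (T Tdag S Sdag A : H →L[ℂ] H)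
    (hT1 : T ∘L Tdag ∘L T = T) (hT2 : Tdag ∘L T ∘L Tdag = Tdag)
    (hT3 : ContinuousLinearMap.adjoint (T ∘L Tdag) = T ∘L Tdag)
    (hT4 : ContinuousLinearMap.adjoint (Tdag ∘L T) = Tdag ∘L T)
    (hTEP : T ∘L Tdag = Tdag ∘L T)
    (hS1 : S ∘L Sdag ∘L S = S) (hS2 : Sdag ∘L S ∘L Sdag = Sdag)
    (hS3 : ContinuousLinearMap.adjoint (S ∘L Sdag) = S ∘L Sdag)
    (hS4 : ContinuousLinearMap.adjoint (Sdag ∘L S) = Sdag ∘L S)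
    (hSEP : S ∘L Sdag = Sdag ∘L S)
    (hc : A ∘L T = S ∘L A)
    (hc2 : A ∘L (Tdag ∘L ContinuousLinearMap.adjoint T)
         = (Sdag ∘L ContinuousLinearMap.adjoint S) ∘L A) :
    A ∘L ContinuousLinearMap.adjoint T = ContinuousLinearMap.adjoint S ∘L A := by
  have hTabs : T ∘L (T ∘L Tdag) = T := by
    rw [hTEP, hT1]
  have hTkey : T ∘L (Tdag ∘L ContinuousLinearMap.adjoint T)
      = ContinuousLinearMap.adjoint T := by
    have := congrArg ContinuousLinearMap.adjoint hTabs
    rw [adjoint_comp, hT3, comp_assoc] at this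
    exact this
  have hSabs : S ∘L (S ∘L Sdag) = S := by
    rw [hSEP, hS1]
  have hSkey : S ∘L (Sdag ∘L ContinuousLinearMap.adjoint S)
      = ContinuousLinearMap.adjoint S := by
    have := congrArg ContinuousLinearMap.adjoint hSabs
    rw [adjoint_comp, hS3, comp_assoc] at this
    exact this
  calc A ∘L ContinuousLinearMap.adjoint T
      = (A ∘L T) ∘L (Tdag ∘L ContinuousLinearMap.adjoint T) := by
        rw [comp_assoc, hTkey]
    _ = S ∘L (A ∘L (Tdag ∘L ContinuousLinearMap.adjoint T)) := by
        rw [hc, comp_assoc]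
    _ = (S ∘L (Sdag ∘L ContinuousLinearMap.adjoint S)) ∘L A := by
        rw [hc2, ← comp_assoc]
    _ = ContinuousLinearMap.adjoint S ∘L A := by rw [hSkey]
end

section
/- Let T and S be EP operators on a complex Hilbert space H and A a bounded operator. If A T = S A, then A T† = S† A. -/
/-- If `T, S` are EP and `A T = S A`, then `A T† = S† A`. -/
theorem stmt_13 {H : Type*} [NormedAddCommGroup H] [InnerProductSpace ℂ H]
    [CompleteSpace H] (T Tdag S Sdag A : H →L[ℂ] H)
    (hT1 : T ∘L Tdag ∘L T = T) (hT2 : Tdag ∘L T ∘L Tdag = Tdag)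
    (hT3 : ContinuousLinearMap.adjoint (T ∘L Tdag) = T ∘L Tdag)
    (hT4 : ContinuousLinearMap.adjoint (Tdag ∘L T) = Tdag ∘L T)
    (hTEP : T ∘L Tdag = Tdag ∘L T)
    (hS1 : S ∘L Sdag ∘L S = S) (hS2 : Sdag ∘L S ∘L Sdag = Sdag)
    (hS3 : ContinuousLinearMap.adjoint (S ∘L Sdag) = S ∘L Sdag)
    (hS4 : ContinuousLinearMap.adjoint (Sdag ∘L S) = Sdag ∘L S)
    (hSEP : S ∘L Sdag = Sdag ∘L S)
    (hc : A ∘L T = S ∘L A) :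
    A ∘L Tdag = Sdag ∘L A := by
  have t1 : T * (Tdag * T) = T := hT1
  have t2 : Tdag * (T * Tdag) = Tdag := hT2
  have tep : T * Tdag = Tdag * T := hTEP
  have s1 : S * (Sdag * S) = S := hS1
  have s2 : Sdag * (S * Sdag) = Sdag := hS2
  have sep : S * Sdag = Sdag * S := hSEP
  have c : A * T = S * A := hc
  -- Q S = S
  have qss : Sdag * (S * S) = S := by
    calc Sdag * (S * S) = (Sdag * S) * S := by noncomm_ring
      _ = (S * Sdag) * S := by rw [sep]
      _ = S * (Sdag * S) := by noncomm_ring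
      _ = S := s1
  -- S A P = S A
  have step1 : S * (A * (Tdag * T)) = S * A := by
    calc S * (A * (Tdag * T)) = (S * A) * (Tdag * T) := by noncomm_ring
      _ = (A * T) * (Tdag * T) := by rw [c]
      _ = A * (T * (Tdag * T)) := by noncomm_ring
      _ = A * T := by rw [t1]
      _ = S * A := c
  have hh : A * (T * Tdag) = S * (A * Tdag) := by
    calc A * (T * Tdag) = (A * T) * Tdag := by noncomm_ring
      _ = (S * A) * Tdag := by rw [c]
      _ = S * (A * Tdag) := by noncomm_ring
  -- key: Q A = A P
  have E1 : Sdag * (S * A) = A * (T * Tdag) := by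
    calc Sdag * (S * A) = Sdag * (S * (A * (Tdag * T))) := by rw [step1]
      _ = Sdag * (S * (A * (T * Tdag))) := by rw [tep]
      _ = Sdag * (S * (S * (A * Tdag))) := by rw [hh]
      _ = (Sdag * (S * S)) * (A * Tdag) := by noncomm_ring
      _ = S * (A * Tdag) := by rw [qss]
      _ = A * (T * Tdag) := hh.symm
  show A * Tdag = Sdag * A
  calc A * Tdag = A * (Tdag * (T * Tdag)) := by rw [t2]
    _ = (A * (Tdag * T)) * Tdag := by noncomm_ring
    _ = (A * (T * Tdag)) * Tdag := by rw [tep]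
    _ = (Sdag * (S * A)) * Tdag := by rw [E1]
    _ = Sdag * ((A * T) * Tdag) := by rw [c]; noncomm_ring
    _ = Sdag * (A * (T * Tdag)) := by noncomm_ring
    _ = Sdag * (Sdag * (S * A)) := by rw [E1]
    _ = (Sdag * (Sdag * S)) * A := by noncomm_ring
    _ = (Sdag * (S * Sdag)) * A := by rw [sep]
    _ = Sdag * A := by rw [s2]
end

section
/- Let T and S be EP operators on a complex Hilbert space H and A, B bounded operators. If A T = S B and A T² = S² B, then A T† = S† B. -/
/-- If `T, S` are EP, `A T = S B` and `A T² = S² B`, then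
`A T† = S† B`. -/
theorem stmt_14 {H : Type*} [NormedAddCommGroup H] [InnerProductSpace ℂ H]
    [CompleteSpace H] (T Tdag S Sdag A B : H →L[ℂ] H)
    (hT1 : T ∘L Tdag ∘L T = T) (hT2 : Tdag ∘L T ∘L Tdag = Tdag)
    (hT3 : ContinuousLinearMap.adjoint (T ∘L Tdag) = T ∘L Tdag)
    (hT4 : ContinuousLinearMap.adjoint (Tdag ∘L T) = Tdag ∘L T)
    (hTEP : T ∘L Tdag = Tdag ∘L T)
    (hS1 : S ∘L Sdag ∘L S = S) (hS2 : Sdag ∘L S ∘L Sdag = Sdag)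
    (hS3 : ContinuousLinearMap.adjoint (S ∘L Sdag) = S ∘L Sdag)
    (hS4 : ContinuousLinearMap.adjoint (Sdag ∘L S) = Sdag ∘L S)
    (hSEP : S ∘L Sdag = Sdag ∘L S)
    (hc1 : A ∘L T = S ∘L B)
    (hc2 : A ∘L (T ∘L T) = (S ∘L S) ∘L B) :
    A ∘L Tdag = Sdag ∘L B := by
  have hT1' : T * (Tdag * T) = T := hT1
  have hT2' : Tdag * (T * Tdag) = Tdag := hT2
  have hE : T * Tdag = Tdag * T := hTEP
  have hS1' : S * (Sdag * S) = S := hS1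
  have hS2' : Sdag * (S * Sdag) = Sdag := hS2
  have hF : S * Sdag = Sdag * S := hSEP
  have h1 : A * T = S * B := hc1
  have h2 : A * (T * T) = S * (S * B) := hc2
  -- basic consequences of the Moore–Penrose / EP identities
  have e1 : T * (Tdag * Tdag) = Tdag := by
    rw [← mul_assoc, hE, mul_assoc, hT2']
  have e2 : Sdag * (Sdag * S) = Sdag := by
    rw [← hF, hS2']
  have e3 : T * (T * Tdag) = T := by
    rw [hE, hT1']
  have e4a : Sdag * (S * S) = S := by
    rw [← mul_assoc, ← hF, mul_assoc, hS1']
  have e4 : Sdag * (S * (S * B)) = S * B := by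
    rw [← mul_assoc S S B, ← mul_assoc, e4a]
  -- F2' : s A T² = A T
  have f2 : Sdag * (A * (T * T)) = A * T := by
    rw [h2, e4, h1]
  -- A t = (S B)(t t)
  have tA : (S * B) * (Tdag * Tdag) = A * Tdag := by
    rw [← h1, mul_assoc, e1]
  -- (S s)(S B) = S B
  have e5 : (S * Sdag) * (S * B) = S * B := by
    rw [mul_assoc, ← mul_assoc Sdag S B, ← mul_assoc, hS1']
  have b1 : (S * Sdag) * (A * Tdag) = A * Tdag := by
    rw [← tA, ← mul_assoc, e5]
  have b2 : (S * Sdag) * (Sdag * B) = Sdag * B := by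
    rw [hF, mul_assoc, ← mul_assoc S Sdag B, ← mul_assoc, hS2']
  have a1 : (A * Tdag) * (T * Tdag) = A * Tdag := by
    rw [mul_assoc, hT2']
  have e7 : (S * B) * (T * Tdag) = S * B := by
    rw [← h1, mul_assoc, e3, h1]
  have e6 : Sdag * (Sdag * (S * B)) = Sdag * B := by
    rw [← mul_assoc Sdag S B, ← mul_assoc, e2]
  have a2 : (Sdag * B) * (T * Tdag) = Sdag * B := by
    calc (Sdag * B) * (T * Tdag)
        = (Sdag * (Sdag * (S * B))) * (T * Tdag) := by rw [e6]
      _ = Sdag * (Sdag * ((S * B) * (T * Tdag))) := by rw [mul_assoc, mul_assoc]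
      _ = Sdag * B := by rw [e7, e6]
  -- c1 : S ((A t) T) = A T
  have six : S * (A * Tdag) = A * (T * Tdag) := by
    calc S * (A * Tdag) = S * ((S * B) * (Tdag * Tdag)) := by rw [tA]
      _ = (S * (S * B)) * (Tdag * Tdag) := by simp only [mul_assoc]
      _ = (A * (T * T)) * (Tdag * Tdag) := by rw [← h2]
      _ = A * (T * (T * (Tdag * Tdag))) := by simp only [mul_assoc]
      _ = A * (T * Tdag) := by rw [e1]
  have c1 : S * ((A * Tdag) * T) = A * T := by
    calc S * ((A * Tdag) * T) = (S * (A * Tdag)) * T := by simp only [mul_assoc]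
      _ = (A * (T * Tdag)) * T := by rw [six]
      _ = A * (T * (Tdag * T)) := by simp only [mul_assoc]
      _ = A * T := by rw [hT1']
  have c2 : S * ((Sdag * B) * T) = A * T := by
    calc S * ((Sdag * B) * T) = ((S * Sdag) * B) * T := by
          simp only [mul_assoc]
      _ = (Sdag * (S * B)) * T := by rw [hF]; simp only [mul_assoc]
      _ = (Sdag * (A * T)) * T := by rw [h1]
      _ = Sdag * (A * (T * T)) := by simp only [mul_assoc]
      _ = A * T := f2
  -- now assemble
  have hX1 : (S * Sdag) * (A * Tdag - Sdag * B) = A * Tdag - Sdag * B := by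
    rw [mul_sub, b1, b2]
  have hX2 : (A * Tdag - Sdag * B) * (T * Tdag) = A * Tdag - Sdag * B := by
    rw [sub_mul, a1, a2]
  have hX3 : S * ((A * Tdag - Sdag * B) * T) = 0 := by
    rw [sub_mul, mul_sub, c1, c2, sub_self]
  have h0 : S * (A * Tdag - Sdag * B) = 0 := by
    conv_lhs => rw [← hX2]
    rw [← mul_assoc (A * Tdag - Sdag * B) T Tdag, ← mul_assoc, hX3, zero_mul]
  have hfin : A * Tdag - Sdag * B = 0 := by
    calc A * Tdag - Sdag * B
        = (S * Sdag) * (A * Tdag - Sdag * B) := hX1.symm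
      _ = (Sdag * S) * (A * Tdag - Sdag * B) := by rw [hF]
      _ = Sdag * (S * (A * Tdag - Sdag * B)) := mul_assoc _ _ _
      _ = 0 := by rw [h0, mul_zero]
  exact sub_eq_zero.mp hfin
end

section
/- Let T be an EP operator on a complex Hilbert space H and A, B bounded operators. If A T = T B and B T = T A, then A T† = T† B and B T† = T† A. -/
/-- In any semigroup: if `t d t = t`, `t d = d t`, `a t = t b`, `b t = t a`,
then `d t a = a d t` (i.e. `a` commutes with the projection `d t`). -/
lemma mp_commP {R : Type*} [Semigroup R] (t d a b : R)
    (h1 : t * (d * t) = t) (hEP : t * d = d * t)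
    (hc1 : a * t = t * b) (hc2 : b * t = t * a) :
    d * (t * a) = a * (d * t) := by
  have s1 : d * (t * a) = (d * t) * (a * (d * t)) := by
    calc d * (t * a) = d * (b * t) := by rw [hc2]
      _ = d * (b * (t * (d * t))) := by rw [h1]
      _ = d * ((b * t) * (d * t)) := by rw [mul_assoc b t (d*t)]
      _ = d * ((t * a) * (d * t)) := by rw [hc2]
      _ = d * (t * (a * (d * t))) := by rw [mul_assoc t a (d*t)]
      _ = (d * t) * (a * (d * t)) := by rw [mul_assoc d t (a*(d*t))]
  have s2 : a * (d * t) = (d * t) * (a * (d * t)) := by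
    calc a * (d * t) = a * (t * d) := by rw [hEP]
      _ = (a * t) * d := by rw [mul_assoc a t d]
      _ = (t * b) * d := by rw [hc1]
      _ = ((t * (d * t)) * b) * d := by rw [h1]
      _ = (t * ((d * t) * b)) * d := by rw [mul_assoc t (d*t) b]
      _ = (t * (d * (t * b))) * d := by rw [mul_assoc d t b]
      _ = (t * (d * (a * t))) * d := by rw [hc1]
      _ = ((t * d) * (a * t)) * d := by rw [mul_assoc t d (a*t)]
      _ = ((d * t) * (a * t)) * d := by rw [hEP]
      _ = (d * t) * ((a * t) * d) := by rw [mul_assoc (d*t) (a*t) d]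
      _ = (d * t) * (a * (t * d)) := by rw [mul_assoc a t d]
      _ = (d * t) * (a * (d * t)) := by rw [hEP]
  exact s1.trans s2.symm

/-- In any semigroup: the Moore–Penrose-type commutation lemma. -/
lemma mp_aux {R : Type*} [Semigroup R] (t d a b : R)
    (h1 : t * (d * t) = t) (h2 : d * (t * d) = d) (hEP : t * d = d * t)
    (hc1 : a * t = t * b) (hc2 : b * t = t * a) :
    a * d = d * b := by
  have commP := mp_commP t d a b h1 hEP hc1 hc2
  have commQ := mp_commP t d b a h1 hEP hc2 hc1
  have key : d * b = a * d := by
    calc d * b = (d * (t * d)) * b := by rw [h2]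
      _ = d * ((t * d) * b) := by rw [mul_assoc d (t*d) b]
      _ = d * ((d * t) * b) := by rw [hEP]
      _ = d * (d * (t * b)) := by rw [mul_assoc d t b]
      _ = d * (b * (d * t)) := by rw [commQ]
      _ = d * (b * (t * d)) := by rw [hEP]
      _ = d * ((b * t) * d) := by rw [mul_assoc b t d]
      _ = d * ((t * a) * d) := by rw [hc2]
      _ = d * (t * (a * d)) := by rw [mul_assoc t a d]
      _ = (d * (t * a)) * d := by rw [mul_assoc d (t*a) d, mul_assoc t a d]
      _ = (a * (d * t)) * d := by rw [commP]
      _ = a * ((d * t) * d) := by rw [mul_assoc a (d*t) d]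
      _ = a * (d * (t * d)) := by rw [mul_assoc d t d]
      _ = a * d := by rw [h2]
  exact key.symm

/-- If `T` is EP, `A T = T B` and `B T = T A`, then `A T† = T† B`
and `B T† = T† A`. -/
theorem stmt_15 {H : Type*} [NormedAddCommGroup H] [InnerProductSpace ℂ H]
    [CompleteSpace H] (T Tdag A B : H →L[ℂ] H)
    (h1 : T ∘L Tdag ∘L T = T) (h2 : Tdag ∘L T ∘L Tdag = Tdag)
    (h3 : ContinuousLinearMap.adjoint (T ∘L Tdag) = T ∘L Tdag)
    (h4 : ContinuousLinearMap.adjoint (Tdag ∘L T) = Tdag ∘L T)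
    (hEP : T ∘L Tdag = Tdag ∘L T)
    (hc1 : A ∘L T = T ∘L B) (hc2 : B ∘L T = T ∘L A) :
    A ∘L Tdag = Tdag ∘L B ∧ B ∘L Tdag = Tdag ∘L A := by
  refine ⟨?_, ?_⟩
  · exact mp_aux T Tdag A B h1 h2 hEP hc1 hc2
  · exact mp_aux T Tdag B A h1 h2 hEP hc2 hc1
end

section
/- Let T and S be EP operators on a complex Hilbert space H and A, B bounded operators. If A T = S B and B T = S A, then A T† = S† B and B T† = S† A. -/
private lemma aux_ep {M : Type*} [Monoid M] (T Td S Sd A B : M)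
    (t1 : T * (Td * T) = T) (t2 : Td * (T * Td) = Td) (tE : T * Td = Td * T)
    (s1 : S * (Sd * S) = S) (s2 : Sd * (S * Sd) = Sd) (sE : S * Sd = Sd * S)
    (c1 : A * T = S * B) (c2 : B * T = S * A) : A * Td = Sd * B := by
  -- helper identities
  have hTd : T * (Td * Td) = Td := by
    rw [← mul_assoc, tE, mul_assoc, t2]
  have hTT : T * (T * Td) = T := by
    rw [tE, t1]
  have hSd : Sd * (Sd * S) = Sd := by
    rw [← sE, s2]
  have hswapS : ∀ X : M, S * (Sd * X) = Sd * (S * X) := by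
    intro X; rw [← mul_assoc, sE, mul_assoc]
  -- step 1 : A * Td = S * (Sd * (A * Td))
  have step1 : A * Td = S * (Sd * (A * Td)) := by
    conv_lhs => rw [← hTd, ← mul_assoc, c1, mul_assoc]
    conv_lhs => rw [← s1, mul_assoc, mul_assoc, ← mul_assoc S B, ← c1,
      mul_assoc, hTd]
  -- step 2 : push through hc2
  have step2 : S * (Sd * (A * Td)) = Sd * (B * (T * Td)) := by
    rw [hswapS, ← mul_assoc S A, ← c2, mul_assoc]
  -- step 3 : Sd * (B * (T * Td)) = Sd * B
  have step3 : Sd * (B * (T * Td)) = Sd * B := by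
    conv_lhs => rw [← hSd, mul_assoc, mul_assoc, ← mul_assoc S B, ← c1,
      mul_assoc, hTT, c1, ← mul_assoc Sd S B, ← mul_assoc, hSd]
  rw [step1, step2, step3]

/-- If `T, S` are EP, `A T = S B` and `B T = S A`, then
`A T† = S† B` and `B T† = S† A`. -/
theorem stmt_16 {H : Type*} [NormedAddCommGroup H] [InnerProductSpace ℂ H]
    [CompleteSpace H] (T Tdag S Sdag A B : H →L[ℂ] H)
    (hT1 : T ∘L Tdag ∘L T = T) (hT2 : Tdag ∘L T ∘L Tdag = Tdag)
    (hT3 : ContinuousLinearMap.adjoint (T ∘L Tdag) = T ∘L Tdag)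
    (hT4 : ContinuousLinearMap.adjoint (Tdag ∘L T) = Tdag ∘L T)
    (hTEP : T ∘L Tdag = Tdag ∘L T)
    (hS1 : S ∘L Sdag ∘L S = S) (hS2 : Sdag ∘L S ∘L Sdag = Sdag)
    (hS3 : ContinuousLinearMap.adjoint (S ∘L Sdag) = S ∘L Sdag)
    (hS4 : ContinuousLinearMap.adjoint (Sdag ∘L S) = Sdag ∘L S)
    (hSEP : S ∘L Sdag = Sdag ∘L S)
    (hc1 : A ∘L T = S ∘L B) (hc2 : B ∘L T = S ∘L A) :
    A ∘L Tdag = Sdag ∘L B ∧ B ∘L Tdag = Sdag ∘L A := by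
  constructor
  · exact aux_ep T Tdag S Sdag A B hT1 hT2 hTEP hS1 hS2 hSEP hc1 hc2
  · exact aux_ep T Tdag S Sdag B A hT1 hT2 hTEP hS1 hS2 hSEP hc2 hc1
end

section
/- Let S and T be bounded operators on a complex Hilbert space H such that S, T, S T, and T S all have closed ranges and (S T)† = T† S†. Then S T and T S are both EP if and only if S† S T = T S S† and S T T† = T† T S. -/
section RingPart

variable {A : Type*} [Ring A] [StarRing A]

/-- Moore–Penrose inverse in a ring with involution. -/
def MPr (x d : A) : Prop :=
  x * (d * x) = x ∧ d * (x * d) = d ∧ star (x * d) = x * d ∧ star (d * x) = d * x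

lemma MPr.star_mpr {x d : A} (h : MPr x d) : MPr (star x) (star d) := by
  obtain ⟨h1, h2, h3, h4⟩ := h
  refine ⟨?_, ?_, ?_, ?_⟩
  · calc star x * (star d * star x) = star (x * d * x) := by
          simp only [star_mul, star_star, mul_assoc]
       _ = star x := by rw [mul_assoc, h1]
  · calc star d * (star x * star d) = star (d * x * d) := by
          simp only [star_mul, star_star, mul_assoc]
       _ = star d := by rw [mul_assoc, h2]
  · calc star (star x * star d) = star (star (d * x)) := by simp only [star_mul, star_star]
       _ = d * x := star_star _
       _ = star (d * x) := h4.symm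
       _ = star x * star d := by simp only [star_mul, mul_assoc]
  · calc star (star d * star x) = star (star (x * d)) := by simp only [star_mul, star_star]
       _ = x * d := star_star _
       _ = star (x * d) := h3.symm
       _ = star d * star x := by simp only [star_mul, mul_assoc]

/-- Uniqueness of the Moore–Penrose inverse. -/
lemma mpr_unique {x d₁ d₂ : A} (H1 : MPr x d₁) (H2 : MPr x d₂) : d₁ = d₂ := by
  obtain ⟨a1, a2, a3, a4⟩ := H1
  obtain ⟨b1, b2, b3, b4⟩ := H2
  have e1 : x * d₁ = x * d₂ := by
    calc x * d₁ = (x * (d₂ * x)) * d₁ := by rw [b1]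
      _ = (x * d₂) * (x * d₁) := by simp only [mul_assoc]
      _ = star (x * d₂) * star (x * d₁) := by rw [a3, b3]
      _ = star ((x * d₁) * (x * d₂)) := by simp only [star_mul, mul_assoc]
      _ = star ((x * (d₁ * x)) * d₂) := by simp only [mul_assoc]
      _ = star (x * d₂) := by rw [a1]
      _ = x * d₂ := b3
  have e2 : d₁ * x = d₂ * x := by
    calc d₁ * x = d₁ * (x * (d₂ * x)) := by rw [b1]
      _ = (d₁ * x) * (d₂ * x) := by simp only [mul_assoc]
      _ = star (d₁ * x) * star (d₂ * x) := by rw [a4, b4]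
      _ = star ((d₂ * x) * (d₁ * x)) := by simp only [star_mul, mul_assoc]
      _ = star (d₂ * (x * (d₁ * x))) := by simp only [mul_assoc]
      _ = star (d₂ * x) := by rw [a1]
      _ = d₂ * x := b4
  calc d₁ = d₁ * (x * d₁) := a2.symm
    _ = d₁ * (x * d₂) := by rw [e1]
    _ = (d₁ * x) * d₂ := by rw [mul_assoc]
    _ = (d₂ * x) * d₂ := by rw [e2]
    _ = d₂ := by rw [mul_assoc, b2]

/-- Forward core: if `st` and `ts` are EP (with `(st)† = td·sd`), then `sd·s·t = t·s·sd`. -/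
lemma ep_one (s sd t td bd : A) (hs : MPr s sd)
    (ha : MPr (s * t) (td * sd)) (hb : MPr (t * s) bd)
    (epa : (s * t) * (td * sd) = (td * sd) * (s * t))
    (epb : (t * s) * bd = bd * (t * s)) :
    sd * (s * t) = t * (s * sd) := by
  obtain ⟨hs1, hs2, hs3, hs4⟩ := hs
  obtain ⟨ha1, ha2, ha3, ha4⟩ := ha
  obtain ⟨hb1, hb2, hb3, hb4⟩ := hb
  -- `sd·s` absorbs `star s`
  have hQs : sd * (s * star s) = star s := by
    have h0 : star (sd * s) * star s = star s := by rw [← star_mul, hs1]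
    rw [hs4] at h0
    simpa only [mul_assoc] using h0
  have hQs' : ∀ c : A, sd * (s * (star s * c)) = star s * c := fun c => by
    simpa only [mul_assoc] using congrArg (· * c) hQs
  -- uses EP of `t*s` : range of `t*s` is contained in range of `star s`
  have hbb : (bd * (t * s)) * (t * s) = t * s := by
    rw [← epb, mul_assoc]; exact hb1
  have F1 : star s * (star t * (star bd * (t * s))) = t * s := by
    have h0 : star (bd * (t * s)) * (t * s) = t * s := by rw [hb4]; exact hbb
    calc star s * (star t * (star bd * (t * s)))
        = star (bd * (t * s)) * (t * s) := by simp only [star_mul, mul_assoc]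
      _ = t * s := h0
  have hQb : sd * (s * (t * s)) = t * s := by
    calc sd * (s * (t * s))
        = sd * (s * (star s * (star t * (star bd * (t * s))))) := by rw [F1]
      _ = star s * (star t * (star bd * (t * s))) := hQs' _
      _ = t * s := F1
  have alpha : sd * (s * (t * (s * sd))) = t * (s * sd) := by
    simpa only [mul_assoc] using congrArg (· * sd) hQb
  -- uses EP of `s*t` : `star (s*t)` is in the left ideal generated by `s*t`
  have g1 : ((td * sd) * (s * t)) * star (s * t) = star (s * t) := by
    have h0 : star ((td * sd) * (s * t)) * star (s * t) = star (s * t) := by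
      rw [← star_mul, ha1]
    rwa [ha4] at h0
  have g2 : ((s * t) * (td * sd)) * star (s * t) = star (s * t) := by rw [epa]; exact g1
  have F2' : s * (t * (td * (sd * (star t * star s)))) = star t * star s := by
    simpa only [star_mul, mul_assoc] using g2
  have u1 : star t * (sd * s) = (star t * star s) * star sd := by
    rw [← hs4]; simp only [star_mul, mul_assoc]
  have u2 : star t * (sd * s)
      = s * (t * (td * (sd * (star t * (star s * star sd))))) := by
    rw [u1, ← F2']; simp only [mul_assoc]
  have hs1' : ∀ c : A, s * (sd * (s * c)) = s * c := fun c => by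
    simpa only [mul_assoc] using congrArg (· * c) hs1
  have beta2 : s * (sd * (star t * (sd * s))) = star t * (sd * s) := by
    calc s * (sd * (star t * (sd * s)))
        = s * (sd * (s * (t * (td * (sd * (star t * (star s * star sd))))))) := by rw [u2]
      _ = s * (t * (td * (sd * (star t * (star s * star sd))))) := hs1' _
      _ = star t * (sd * s) := u2.symm
  have k1 : ∀ c : A, star s * (star sd * c) = sd * (s * c) := fun c => by
    rw [← mul_assoc, ← star_mul, hs4, mul_assoc]
  have k3 : star sd * star s = s * sd := by rw [← star_mul, hs3]
  have h0 := congrArg star beta2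
  simp only [star_mul, star_star, mul_assoc] at h0
  rw [k3, k1, k1] at h0
  exact h0.symm.trans alpha

/-- Backward: the two intertwining relations imply both `st` and `ts` are EP. -/
lemma ep_back (s sd t td bd : A) (hs : MPr s sd) (ht : MPr t td)
    (ha : MPr (s * t) (td * sd)) (hb : MPr (t * s) bd)
    (h1 : sd * (s * t) = t * (s * sd)) (h2 : s * (t * td) = td * (t * s)) :
    (s * t) * (td * sd) = (td * sd) * (s * t) ∧ (t * s) * bd = bd * (t * s) := by
  obtain ⟨hs1, hs2, hs3, hs4⟩ := hs
  obtain ⟨ht1, ht2, ht3, ht4⟩ := ht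
  obtain ⟨ha1, ha2, ha3, ha4⟩ := ha
  have h1c : ∀ c : A, sd * (s * (t * c)) = t * (s * (sd * c)) := fun c => by
    simpa only [mul_assoc] using congrArg (· * c) h1
  have h2c : ∀ c : A, s * (t * (td * c)) = td * (t * (s * c)) := fun c => by
    simpa only [mul_assoc] using congrArg (· * c) h2
  have hs1' : ∀ c : A, s * (sd * (s * c)) = s * c := fun c => by
    simpa only [mul_assoc] using congrArg (· * c) hs1
  have ht1' : ∀ c : A, t * (td * (t * c)) = t * c := fun c => by
    simpa only [mul_assoc] using congrArg (· * c) ht1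
  have ha2' : ∀ c : A, td * (sd * (s * (t * (td * (sd * c))))) = td * (sd * c) := fun c => by
    simpa only [mul_assoc] using congrArg (· * c) ha2
  -- EP of s*t
  have epa : (s * t) * (td * sd) = (td * sd) * (s * t) := by
    have l : s * (t * (td * sd)) = td * (t * (s * sd)) := h2c sd
    have r : td * (sd * (s * t)) = td * (t * (s * sd)) := congrArg (td * ·) h1
    calc (s * t) * (td * sd) = s * (t * (td * sd)) := by rw [mul_assoc]
      _ = td * (t * (s * sd)) := l
      _ = td * (sd * (s * t)) := r.symm
      _ = (td * sd) * (s * t) := by rw [mul_assoc]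
  -- candidate MP inverse of t*s
  set D : A := t * (td * (sd * (td * (sd * s)))) with hD
  have hbD : (t * s) * D = t * (td * (sd * s)) := by
    calc (t * s) * D = t * (s * (t * (td * (sd * (td * (sd * s)))))) := by
          rw [hD]; simp only [mul_assoc]
      _ = t * (td * (t * (s * (sd * (td * (sd * s)))))) := by rw [h2c]
      _ = t * (td * (sd * (s * (t * (td * (sd * s)))))) := by rw [← h1c]
      _ = t * (td * (sd * s)) := by rw [ha2']
  have hDb : D * (t * s) = t * (td * (sd * s)) := by
    calc D * (t * s) = t * (td * (sd * (td * (sd * (s * (t * s)))))) := by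
          rw [hD]; simp only [mul_assoc]
      _ = t * (td * (sd * (td * (t * (s * (sd * s)))))) := by rw [h1c]
      _ = t * (td * (sd * (s * (t * (td * (sd * s)))))) := by rw [← h2c]
      _ = t * (td * (sd * s)) := by rw [ha2']
  -- self-adjointness of t * (td * (sd * s))
  have hXsa : star (t * (td * (sd * s))) = t * (td * (sd * s)) := by
    have Y : t * (td * (sd * (s * (t * (td * (sd * s))))))
        = (t * td) * ((sd * s) * (t * td)) := by
      calc t * (td * (sd * (s * (t * (td * (sd * s))))))
          = t * (td * (sd * (td * (t * (s * (sd * s)))))) := by rw [h2c]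
        _ = t * (td * (sd * (td * (t * s)))) := by rw [hs1]
        _ = t * (td * (sd * (s * (t * td)))) := by rw [← h2]
        _ = (t * td) * ((sd * s) * (t * td)) := by simp only [mul_assoc]
    have Z : t * (td * (sd * (s * (t * (td * (sd * s)))))) = t * (td * (sd * s)) := by
      rw [ha2']
    have hX2 : t * (td * (sd * s)) = (t * td) * ((sd * s) * (t * td)) := Z.symm.trans Y
    rw [hX2, star_mul, star_mul, ht3, hs4]
    simp only [mul_assoc]
  -- D is an MP inverse of t*s
  have hmp : MPr (t * s) D := by
    refine ⟨?_, ?_, ?_, ?_⟩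
    · rw [hDb]
      simp only [mul_assoc]
      rw [h2c, hs1, ht1']
    · rw [hbD, hD]
      simp only [mul_assoc]
      rw [ha2']
    · rw [hbD]; exact hXsa
    · rw [hDb]; exact hXsa
  have hbd : bd = D := mpr_unique hb hmp
  refine ⟨epa, ?_⟩
  rw [hbd, hbD, hDb]

/-- The main result at the level of rings with involution. -/
lemma mpr_main (s sd t td bd : A) (hs : MPr s sd) (ht : MPr t td)
    (ha : MPr (s * t) (td * sd)) (hb : MPr (t * s) bd) :
    ((s * t) * (td * sd) = (td * sd) * (s * t) ∧ (t * s) * bd = bd * (t * s)) ↔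
      (sd * (s * t) = t * (s * sd) ∧ s * (t * td) = td * (t * s)) := by
  constructor
  · rintro ⟨epa, epb⟩
    refine ⟨ep_one s sd t td bd hs ha hb epa epb, ?_⟩
    have ha' : MPr (star t * star s) (star sd * star td) := by
      have := ha.star_mpr; rwa [star_mul, star_mul] at this
    have hb' : MPr (star s * star t) (star bd) := by
      have := hb.star_mpr; rwa [star_mul] at this
    have epa' : (star t * star s) * (star sd * star td)
        = (star sd * star td) * (star t * star s) := by
      have := congrArg star epa; simp only [star_mul] at this; exact this.symm
    have epb' : (star s * star t) * star bd = star bd * (star s * star t) := by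
      have := congrArg star epb; simp only [star_mul] at this; exact this.symm
    have key := ep_one (star t) (star td) (star s) (star sd) (star bd)
      ht.star_mpr ha' hb' epa' epb'
    have := congrArg star key
    simpa only [star_mul, star_star, mul_assoc] using this
  · rintro ⟨hh1, hh2⟩
    exact ep_back s sd t td bd hs ht ha hb hh1 hh2

end RingPart

/-- `D` is a Moore-Penrose inverse of the bounded operator `X`. -/
def IsMPInv {H : Type*} [NormedAddCommGroup H] [InnerProductSpace ℂ H]
    [CompleteSpace H] (X D : H →L[ℂ] H) : Prop :=
  X ∘L D ∘L X = X ∧ D ∘L X ∘L D = D ∧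
    ContinuousLinearMap.adjoint (X ∘L D) = X ∘L D ∧
    ContinuousLinearMap.adjoint (D ∘L X) = D ∘L X

lemma isMPInv_iff_mpr {H : Type*} [NormedAddCommGroup H] [InnerProductSpace ℂ H]
    [CompleteSpace H] (X D : H →L[ℂ] H) : IsMPInv X D ↔ MPr X D := by
  unfold IsMPInv MPr
  simp only [← ContinuousLinearMap.star_eq_adjoint, ContinuousLinearMap.mul_def]

/-- If `S, T, S T, T S` all have Moore-Penrose inverses and the
reverse-order law `(S T)† = T† S†` holds, then `S T` and `T S` are both EP iff
`S† S T = T S S†` and `S T T† = T† T S`. -/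
theorem stmt_17 {H : Type*} [NormedAddCommGroup H] [InnerProductSpace ℂ H]
    [CompleteSpace H] (S Sdag T Tdag STdag TSdag : H →L[ℂ] H)
    (hS : IsMPInv S Sdag) (hT : IsMPInv T Tdag)
    (hST : IsMPInv (S ∘L T) STdag) (hTS : IsMPInv (T ∘L S) TSdag)
    (hrev : STdag = Tdag ∘L Sdag) :
    ((S ∘L T) ∘L STdag = STdag ∘L (S ∘L T) ∧
      (T ∘L S) ∘L TSdag = TSdag ∘L (T ∘L S)) ↔
    (Sdag ∘L S ∘L T = T ∘L S ∘L Sdag ∧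
      S ∘L T ∘L Tdag = Tdag ∘L T ∘L S) := by
  subst hrev
  rw [isMPInv_iff_mpr] at hS hT hST hTS
  simp only [← ContinuousLinearMap.mul_def] at hS hT hST hTS ⊢
  exact mpr_main S Sdag T Tdag TSdag hS hT hST hTS
end

section
/- Let S and T be EP operators on a complex Hilbert space H. Then the range of S T is closed if and only if the range of T S is closed. -/
open ContinuousLinearMap Submodule

section Auxiliary

variable {E F : Type*} [NormedAddCommGroup E] [InnerProductSpace ℂ E] [CompleteSpace E]
  [NormedAddCommGroup F] [InnerProductSpace ℂ F] [CompleteSpace F]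

/-- For `A ≤ Kᗮ` with `K` closed, `A ⊔ K` is closed iff `A` is closed. -/
theorem stmt19_closed_sup_iff {K A : Submodule ℂ E} (hK : IsClosed (K : Set E)) (hA : A ≤ Kᗮ) :
    IsClosed ((A ⊔ K : Submodule ℂ E) : Set E) ↔ IsClosed (A : Set E) := by
  haveI : CompleteSpace K := hK.completeSpace_coe
  constructor
  · intro h
    have hAeq : (A : Set E) = ((A ⊔ K : Submodule ℂ E) : Set E) ∩ (Kᗮ : Set E) := by
      ext x
      constructor
      · intro hx
        exact ⟨(le_sup_left : A ≤ A ⊔ K) hx, hA hx⟩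
      · rintro ⟨hx1, hx2⟩
        rcases Submodule.mem_sup.mp hx1 with ⟨a, ha, k, hk, rfl⟩
        have hk0 : k ∈ Kᗮ := by
          have := Kᗮ.sub_mem hx2 (hA ha)
          simpa using this
        have : k = 0 :=
          (inner_self_eq_zero (𝕜 := ℂ)).mp (Submodule.inner_right_of_mem_orthogonal hk hk0)
        simpa [this] using ha
    rw [hAeq]
    exact h.inter K.isClosed_orthogonal
  · intro h
    refine isClosed_of_closure_subset ?_
    intro x hx
    set P : E →L[ℂ] E := Kᗮ.subtypeL ∘L orthogonalProjection Kᗮ with hPdef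
    have hPmem : ∀ y ∈ (A ⊔ K : Submodule ℂ E), P y ∈ A ∧ y - P y ∈ K := by
      rintro y hy
      rcases Submodule.mem_sup.mp hy with ⟨a, ha, k, hk, rfl⟩
      have h1 : (orthogonalProjection Kᗮ a : E) = a :=
        Submodule.starProjection_eq_self_iff.mpr (hA ha)
      have h2 : orthogonalProjection Kᗮ k = 0 :=
        orthogonalProjection_mem_subspace_orthogonalComplement_eq_zero
          (K.le_orthogonal_orthogonal hk)
      have hP : P (a + k) = a := by
        simp [hPdef, map_add, h1, h2]
      constructor
      · rw [hP]; exact ha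
      · rw [hP]; simpa using hk
    have hPx : P x ∈ A := by
      have : P x ∈ closure (P '' ((A ⊔ K : Submodule ℂ E) : Set E)) :=
        (P.continuous.continuousWithinAt.mem_closure_image ?_)
      · have hsub : P '' ((A ⊔ K : Submodule ℂ E) : Set E) ⊆ (A : Set E) := by
          rintro _ ⟨y, hy, rfl⟩; exact (hPmem y hy).1
        have := closure_mono hsub this
        rwa [h.closure_eq] at this
      · exact hx
    have hQx : x - P x ∈ K := by
      set Q : E →L[ℂ] E := ContinuousLinearMap.id ℂ E - P with hQdef
      have : Q x ∈ closure (Q '' ((A ⊔ K : Submodule ℂ E) : Set E)) :=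
        (Q.continuous.continuousWithinAt.mem_closure_image hx)
      have hsub : Q '' ((A ⊔ K : Submodule ℂ E) : Set E) ⊆ (K : Set E) := by
        rintro _ ⟨y, hy, rfl⟩
        simpa [hQdef] using (hPmem y hy).2
      have h2 := closure_mono hsub this
      rw [hK.closure_eq] at h2
      simpa [hQdef] using h2
    exact Submodule.mem_sup.mpr ⟨P x, hPx, x - P x, hQx, by abel⟩

/-- `ker A = (range A†)ᗮ`. -/
theorem stmt19_ker_eq_orth_range_adjoint (A : E →L[ℂ] F) :
    LinearMap.ker (A : E →ₗ[ℂ] F) = (LinearMap.range ((adjoint A : F →L[ℂ] E) : F →ₗ[ℂ] E))ᗮ := by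
  ext x
  simp only [LinearMap.mem_ker, Submodule.mem_orthogonal]
  constructor
  · rintro hx _ ⟨y, rfl⟩
    rw [ContinuousLinearMap.coe_coe, adjoint_inner_left, show A x = 0 from hx, inner_zero_right]
  · intro hx
    have h0 : inner (𝕜 := ℂ) (A x) (A x) = 0 := by
      rw [← adjoint_inner_left]
      exact hx _ ⟨A x, rfl⟩
    exact inner_self_eq_zero.mp h0

/-- Closed range theorem, one direction. -/
theorem stmt19_adjoint_range_isClosed (A : E →L[ℂ] F)
    (h : IsClosed (LinearMap.range (A : E →ₗ[ℂ] F) : Set F)) :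
    IsClosed (LinearMap.range ((adjoint A : F →L[ℂ] E) : F →ₗ[ℂ] E) : Set E) := by
  haveI : CompleteSpace (LinearMap.range A.toLinearMap) := h.completeSpace_coe
  have hkerC : IsClosed ((LinearMap.ker A.toLinearMap : Submodule ℂ E) : Set E) :=
    ContinuousLinearMap.isClosed_ker A
  haveI : CompleteSpace (LinearMap.ker A.toLinearMap) := hkerC.completeSpace_coe
  set K : Submodule ℂ E := (LinearMap.ker A.toLinearMap)ᗮ with hKdef
  haveI : CompleteSpace K := (LinearMap.ker A.toLinearMap).isClosed_orthogonal.completeSpace_coe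
  set Ares : K →L[ℂ] (LinearMap.range A.toLinearMap) :=
    (A ∘L K.subtypeL).codRestrict (LinearMap.range A.toLinearMap)
      (fun x => LinearMap.mem_range_self _ _) with hAresdef
  have hAres_apply : ∀ (x : K), ((Ares x : F)) = A (x : E) := fun x => rfl
  have hinj : LinearMap.ker Ares.toLinearMap = ⊥ := by
    rw [LinearMap.ker_eq_bot']
    intro x hx
    have hAx : A (x : E) = 0 := by
      have := congrArg Subtype.val hx
      simpa [hAres_apply] using this
    have hxker : (x : E) ∈ LinearMap.ker A.toLinearMap := hAx
    have h0 := Submodule.inner_right_of_mem_orthogonal hxker x.2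
    exact Subtype.ext ((inner_self_eq_zero (𝕜 := ℂ)).mp h0)
  have hsurj : LinearMap.range Ares.toLinearMap = ⊤ := by
    rw [LinearMap.range_eq_top]
    rintro ⟨_, ⟨x, rfl⟩⟩
    obtain ⟨u, hu, v, hv, hx⟩ :=
      Submodule.exists_add_mem_mem_orthogonal (K := LinearMap.ker A.toLinearMap) x
    refine ⟨⟨v, hv⟩, ?_⟩
    apply Subtype.ext
    rw [ContinuousLinearMap.coe_coe, hAres_apply]
    have hu0 : A u = 0 := hu
    simp [hx, map_add, hu0]
  set e := ContinuousLinearEquiv.ofBijective Ares hinj hsurj with hedef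
  have hrange : LinearMap.range (adjoint A).toLinearMap = K := by
    apply le_antisymm
    · rintro _ ⟨y, rfl⟩
      rw [hKdef, Submodule.mem_orthogonal]
      intro u hu
      rw [ContinuousLinearMap.coe_coe, adjoint_inner_right, show A u = 0 from hu, inner_zero_left]
    · intro y hy
      set y0 : K := ⟨y, hy⟩ with hy0def
      set B : (LinearMap.range A.toLinearMap) →L[ℂ] K :=
        (e.symm : (LinearMap.range A.toLinearMap) →L[ℂ] K) with hBdef
      set w : LinearMap.range A.toLinearMap := adjoint B y0 with hwdef
      refine ⟨(w : F), ?_⟩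
      apply ext_inner_left ℂ
      intro v
      obtain ⟨u, hu, p, hp, hv⟩ :=
        Submodule.exists_add_mem_mem_orthogonal (K := LinearMap.ker A.toLinearMap) v
      rw [ContinuousLinearMap.coe_coe, adjoint_inner_right]
      have hAv : A v = A p := by
        have hu0 : A u = 0 := hu
        simp [hv, map_add, hu0]
      rw [hAv]
      have hstep : inner (𝕜 := ℂ) (A p) ((w : F)) = inner (𝕜 := ℂ) p y := by
        have h1 : inner (𝕜 := ℂ) (A p) ((w : F)) = inner (𝕜 := ℂ) (Ares ⟨p, hp⟩) w := rfl
        rw [h1, hwdef]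
        have h2 : Ares ⟨p, hp⟩ = e ⟨p, hp⟩ := rfl
        rw [h2, adjoint_inner_right]
        have h3 : B (e ⟨p, hp⟩) = ⟨p, hp⟩ := e.symm_apply_apply _
        rw [h3]
        rfl
      rw [hstep, hv, inner_add_left,
        Submodule.inner_right_of_mem_orthogonal hu hy, zero_add]
  rw [hrange]
  exact (LinearMap.ker A.toLinearMap).isClosed_orthogonal

/-- Closed range theorem. -/
theorem stmt19_adjoint_range_isClosed_iff (A : E →L[ℂ] F) :
    IsClosed (LinearMap.range ((adjoint A : F →L[ℂ] E) : F →ₗ[ℂ] E) : Set E) ↔ IsClosed (LinearMap.range (A : E →ₗ[ℂ] F) : Set F) :=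
  ⟨fun h => by simpa [adjoint_adjoint] using stmt19_adjoint_range_isClosed (adjoint A) h,
   stmt19_adjoint_range_isClosed A⟩

/-- For an operator with closed range whose kernel is the orthogonal complement of its range,
the image of a submodule is closed iff the sup of the submodule with the kernel is closed. -/
theorem stmt19_map_closed_iff_sup_ker {S : E →L[ℂ] E}
    (hSr : IsClosed ((LinearMap.range (S : E →ₗ[ℂ] E) : Submodule ℂ E) : Set E))
    (hker : LinearMap.ker (S : E →ₗ[ℂ] E) = (LinearMap.range (S : E →ₗ[ℂ] E))ᗮ) (M : Submodule ℂ E) :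
    IsClosed ((M.map (S : E →ₗ[ℂ] E) : Submodule ℂ E) : Set E) ↔
      IsClosed ((M ⊔ LinearMap.ker (S : E →ₗ[ℂ] E) : Submodule ℂ E) : Set E) := by
  set K : Submodule ℂ E := LinearMap.ker S.toLinearMap with hKdef
  have hKc : IsClosed (K : Set E) := ContinuousLinearMap.isClosed_ker S
  haveI : CompleteSpace K := hKc.completeSpace_coe
  haveI : CompleteSpace (LinearMap.range S.toLinearMap) := hSr.completeSpace_coe
  have hrle : LinearMap.range S.toLinearMap ≤ Kᗮ := by
    rw [hker]
    exact Submodule.le_orthogonal_orthogonal _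
  set Q : E →L[ℂ] E := K.subtypeL ∘L orthogonalProjection K with hQdef
  have hQmem : ∀ x, Q x ∈ K := fun x => (orthogonalProjection K x).2
  have hQK : ∀ x ∈ K, Q x = x := fun x hx => by
    simpa [hQdef] using Submodule.starProjection_eq_self_iff.mpr hx
  have hQorth : ∀ x ∈ Kᗮ, Q x = 0 := fun x hx => by
    simp [hQdef, orthogonalProjection_mem_subspace_orthogonalComplement_eq_zero hx]
  have hsubmem : ∀ x, x - Q x ∈ Kᗮ := fun x => Submodule.sub_starProjection_mem_orthogonal x
  have hSQ : ∀ x, S (Q x) = 0 := fun x => hQmem x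
  set Θ : E →L[ℂ] E := S + Q with hTdef
  have hTapp : ∀ x, Θ x = S x + Q x := fun x => rfl
  have hinj : LinearMap.ker Θ.toLinearMap = ⊥ := by
    rw [LinearMap.ker_eq_bot']
    intro x hx
    have hx' : S x + Q x = 0 := hx
    have horth : inner (𝕜 := ℂ) (S x) (Q x) = 0 :=
      Submodule.inner_right_of_mem_orthogonal (LinearMap.mem_range_self S.toLinearMap x)
        (hker ▸ hQmem x)
    have hS0 : S x = 0 := by
      have hSneg : S x = -(Q x) := eq_neg_of_add_eq_zero_left hx'
      have h1 : inner (𝕜 := ℂ) (S x) (S x) = 0 := by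
        nth_rewrite 2 [hSneg]
        rw [inner_neg_right, horth, neg_zero]
      exact inner_self_eq_zero.mp h1
    have hQ0 : Q x = 0 := by
      have := hx'
      rw [hS0, zero_add] at this
      exact this
    have hxK : x ∈ K := hS0
    have := hQK x hxK
    rw [hQ0] at this
    exact this.symm
  have hsurj : LinearMap.range Θ.toLinearMap = ⊤ := by
    rw [LinearMap.range_eq_top]
    intro y
    obtain ⟨y₁, hy₁, y₂, hy₂, hy⟩ :=
      Submodule.exists_add_mem_mem_orthogonal (K := LinearMap.range S.toLinearMap) y
    obtain ⟨x, rfl⟩ := hy₁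
    have hy₂K : y₂ ∈ K := by rw [hker]; exact hy₂
    refine ⟨(x - Q x) + y₂, ?_⟩
    have e1 : S ((x - Q x) + y₂) = S x := by
      rw [map_add, map_sub, hSQ x, show S y₂ = 0 from hy₂K, sub_zero, add_zero]
    have e2 : Q ((x - Q x) + y₂) = y₂ := by
      rw [map_add, hQorth _ (hsubmem x), hQK _ hy₂K, zero_add]
    rw [ContinuousLinearMap.coe_coe, hTapp, e1, e2]
    exact hy.symm
  set e := ContinuousLinearEquiv.ofBijective Θ hinj hsurj with hedef
  have himg : (M ⊔ K).map Θ.toLinearMap = M.map S.toLinearMap ⊔ K := by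
    apply le_antisymm
    · rintro _ ⟨x, hx, rfl⟩
      obtain ⟨m, hm, k, hk, rfl⟩ := Submodule.mem_sup.mp hx
      rw [ContinuousLinearMap.coe_coe, hTapp]
      refine Submodule.mem_sup.mpr ⟨S (m + k), ?_, Q (m + k), hQmem _, rfl⟩
      have : S (m + k) = S m := by
        rw [map_add, show S k = 0 from hk, add_zero]
      rw [this]
      exact ⟨m, hm, rfl⟩
    · refine sup_le ?_ ?_
      · rintro _ ⟨m, hm, rfl⟩
        refine ⟨m - Q m, ?_, ?_⟩
        · exact Submodule.sub_mem _ ((le_sup_left : M ≤ M ⊔ K) hm)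
            ((le_sup_right : K ≤ M ⊔ K) (hQmem m))
        · rw [ContinuousLinearMap.coe_coe, hTapp, map_sub, hSQ m, sub_zero, map_sub,
            hQK _ (hQmem m), sub_self, add_zero, ContinuousLinearMap.coe_coe]
      · intro k hk
        refine ⟨k, (le_sup_right : K ≤ M ⊔ K) hk, ?_⟩
        rw [ContinuousLinearMap.coe_coe, hTapp, show S k = 0 from hk, zero_add, hQK _ hk]
  have hclosed_map : IsClosed (((M ⊔ K).map Θ.toLinearMap : Submodule ℂ E) : Set E) ↔
      IsClosed ((M ⊔ K : Submodule ℂ E) : Set E) := by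
    have hset : (((M ⊔ K).map Θ.toLinearMap : Submodule ℂ E) : Set E)
        = ⇑e '' ((M ⊔ K : Submodule ℂ E) : Set E) := by
      have : ⇑e = ⇑Θ := ContinuousLinearEquiv.coeFn_ofBijective Θ hinj hsurj
      rw [this]
      rfl
    rw [hset]
    exact e.toHomeomorph.isClosed_image
  have hMSle : M.map S.toLinearMap ≤ Kᗮ := fun x hx => by
    obtain ⟨m, _, rfl⟩ := hx
    exact hrle (LinearMap.mem_range_self S.toLinearMap m)
  rw [← stmt19_closed_sup_iff hKc hMSle, ← himg, hclosed_map]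

theorem stmt19_sup_orth_closed_iff_proj (W : Submodule ℂ E) [HasOrthogonalProjection W]
    (N : Submodule ℂ E) :
    IsClosed ((Wᗮ ⊔ N : Submodule ℂ E) : Set E) ↔
      IsClosed ((N.map ((W.subtypeL ∘L orthogonalProjection W : E →L[ℂ] E) : E →ₗ[ℂ] E) : Submodule ℂ E) : Set E) := by
  set P : E →L[ℂ] E := W.subtypeL ∘L orthogonalProjection W with hPdef
  have hPmem : ∀ x, P x ∈ W := fun x => (orthogonalProjection W x).2
  have hsubmem : ∀ x, x - P x ∈ Wᗮ := fun x => Submodule.sub_starProjection_mem_orthogonal x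
  have heq : N.map P.toLinearMap ⊔ Wᗮ = Wᗮ ⊔ N := by
    apply le_antisymm
    · refine sup_le ?_ le_sup_left
      rintro _ ⟨n, hn, rfl⟩
      rw [ContinuousLinearMap.coe_coe, show P n = n - (n - P n) from (sub_sub_cancel n (P n)).symm]
      exact Submodule.sub_mem _ (Submodule.mem_sup_right hn) (Submodule.mem_sup_left (hsubmem n))
    · refine sup_le ?_ ?_
      · exact le_sup_right
      · intro n hn
        rw [show n = P n + (n - P n) from (add_sub_cancel (P n) n).symm]
        exact Submodule.add_mem _ (Submodule.mem_sup_left ⟨n, hn, rfl⟩)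
          (Submodule.mem_sup_right (hsubmem n))
  rw [← heq]
  refine stmt19_closed_sup_iff W.isClosed_orthogonal ?_
  rintro x hx
  obtain ⟨n, _, rfl⟩ := Submodule.mem_map.mp hx
  exact Submodule.le_orthogonal_orthogonal W (hPmem n)

theorem stmt19_subtype_image_closed {U : Submodule ℂ E} (hU : IsClosed (U : Set E))
    (W : Submodule ℂ U) :
    IsClosed (W : Set U) ↔ IsClosed ((W.map (U.subtypeL : U →ₗ[ℂ] E) : Submodule ℂ E) : Set E) := by
  have hemb := hU.isClosedEmbedding_subtypeVal
  rw [hemb.isClosed_iff_image_isClosed]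
  have himg : (Subtype.val '' (W : Set U) : Set E)
      = ((W.map (U.subtypeL : U →ₗ[ℂ] E) : Submodule ℂ E) : Set E) := by
    ext x
    constructor
    · rintro ⟨y, hy, rfl⟩
      exact ⟨y, hy, rfl⟩
    · rintro ⟨y, hy, rfl⟩
      exact ⟨y, hy, rfl⟩
  exact (congrArg IsClosed himg).to_iff

theorem stmt19_orth_sup_closed {M N : Submodule ℂ E} (hM : IsClosed (M : Set E))
    (hN : IsClosed (N : Set E))
    (h : IsClosed ((M ⊔ N : Submodule ℂ E) : Set E)) :
    IsClosed ((Mᗮ ⊔ Nᗮ : Submodule ℂ E) : Set E) := by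
  haveI : CompleteSpace M := hM.completeSpace_coe
  haveI : CompleteSpace N := hN.completeSpace_coe
  haveI : CompleteSpace Mᗮ := M.isClosed_orthogonal.completeSpace_coe
  set R : N →L[ℂ] Mᗮ := (orthogonalProjection Mᗮ) ∘L N.subtypeL with hRdef
  have h1 : IsClosed ((Mᗮᗮ ⊔ N : Submodule ℂ E) : Set E) ↔
      IsClosed ((N.map ((Mᗮ.subtypeL ∘L orthogonalProjection Mᗮ : E →L[ℂ] E) : E →ₗ[ℂ] E) : Submodule ℂ E) : Set E) :=
    stmt19_sup_orth_closed_iff_proj Mᗮ N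
  rw [Submodule.orthogonal_orthogonal] at h1
  have hrangeR : (LinearMap.range R.toLinearMap).map Mᗮ.subtypeL.toLinearMap
      = N.map (Mᗮ.subtypeL ∘L orthogonalProjection Mᗮ).toLinearMap := by
    apply le_antisymm
    · rintro _ ⟨z, ⟨n, rfl⟩, rfl⟩
      exact ⟨(n : E), n.2, rfl⟩
    · rintro _ ⟨n, hn, rfl⟩
      exact ⟨R ⟨n, hn⟩, ⟨⟨n, hn⟩, rfl⟩, rfl⟩
  have hRclosed : IsClosed ((LinearMap.range R.toLinearMap : Submodule ℂ Mᗮ) : Set Mᗮ) := by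
    rw [stmt19_subtype_image_closed M.isClosed_orthogonal, hrangeR, ← h1]
    exact h
  have hadj : adjoint R = (orthogonalProjection N) ∘L Mᗮ.subtypeL := by
    symm
    rw [ContinuousLinearMap.eq_adjoint_iff]
    intro x y
    have hL : inner (𝕜 := ℂ) (((orthogonalProjection N ∘L Mᗮ.subtypeL) x)) y
        = inner (𝕜 := ℂ) (x : E) (y : E) := by
      have hsub : (x : E) - orthogonalProjection N (x : E) ∈ Nᗮ :=
        Submodule.sub_starProjection_mem_orthogonal _
      have h0 : inner (𝕜 := ℂ) ((x : E) - orthogonalProjection N (x : E)) (y : E) = 0 :=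
        Submodule.inner_left_of_mem_orthogonal y.2 hsub
      rw [inner_sub_left] at h0
      have := sub_eq_zero.mp h0
      exact this.symm
    have hR : inner (𝕜 := ℂ) x (R y) = inner (𝕜 := ℂ) (x : E) (y : E) := by
      have hsub : (y : E) - orthogonalProjection Mᗮ (y : E) ∈ Mᗮᗮ :=
        Submodule.sub_starProjection_mem_orthogonal _
      have h0 : inner (𝕜 := ℂ) (x : E) ((y : E) - orthogonalProjection Mᗮ (y : E)) = 0 :=
        Submodule.inner_right_of_mem_orthogonal x.2 hsub
      rw [inner_sub_right] at h0
      exact (sub_eq_zero.mp h0).symm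
    rw [hL, hR]
  have h2 : IsClosed ((LinearMap.range (adjoint R).toLinearMap : Submodule ℂ N) : Set N) :=
    stmt19_adjoint_range_isClosed R hRclosed
  have hrangeAdj : (LinearMap.range (adjoint R).toLinearMap).map N.subtypeL.toLinearMap
      = Mᗮ.map (N.subtypeL ∘L orthogonalProjection N).toLinearMap := by
    rw [hadj]
    apply le_antisymm
    · rintro _ ⟨z, ⟨x, rfl⟩, rfl⟩
      exact ⟨(x : E), x.2, rfl⟩
    · rintro _ ⟨x, hx, rfl⟩
      exact ⟨(orthogonalProjection N ∘L Mᗮ.subtypeL) ⟨x, hx⟩, ⟨⟨x, hx⟩, rfl⟩, rfl⟩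
  have h3 : IsClosed ((Mᗮ.map (N.subtypeL ∘L orthogonalProjection N).toLinearMap : Submodule ℂ E) : Set E) := by
    rw [← hrangeAdj, ← stmt19_subtype_image_closed hN]
    exact h2
  have h4 := (stmt19_sup_orth_closed_iff_proj N Mᗮ).mpr h3
  rwa [sup_comm] at h4

end Auxiliary

/-- STATEMENT 19: For EP operators `S, T` on a complex Hilbert space, the range of
`S T` is closed iff the range of `T S` is closed. -/
theorem stmt_19 {H : Type*} [NormedAddCommGroup H] [InnerProductSpace ℂ H]
    [CompleteSpace H] (S T : H →L[ℂ] H)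
    (hSclosed : IsClosed (LinearMap.range (S : H →ₗ[ℂ] H) : Set H))
    (hTclosed : IsClosed (LinearMap.range (T : H →ₗ[ℂ] H) : Set H))
    (hSEP : LinearMap.range (S : H →ₗ[ℂ] H) = LinearMap.range ((ContinuousLinearMap.adjoint S : H →L[ℂ] H) : H →ₗ[ℂ] H))
    (hTEP : LinearMap.range (T : H →ₗ[ℂ] H) = LinearMap.range ((ContinuousLinearMap.adjoint T : H →L[ℂ] H) : H →ₗ[ℂ] H)) :
    IsClosed (LinearMap.range ((S ∘L T : H →L[ℂ] H) : H →ₗ[ℂ] H) : Set H) ↔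
      IsClosed (LinearMap.range ((T ∘L S : H →L[ℂ] H) : H →ₗ[ℂ] H) : Set H) := by
  haveI : CompleteSpace (LinearMap.range S.toLinearMap) := hSclosed.completeSpace_coe
  haveI : CompleteSpace (LinearMap.range T.toLinearMap) := hTclosed.completeSpace_coe
  have hkerS : LinearMap.ker S.toLinearMap = (LinearMap.range S.toLinearMap)ᗮ := by
    rw [stmt19_ker_eq_orth_range_adjoint S, ← hSEP]
  have hkerT : LinearMap.ker T.toLinearMap = (LinearMap.range T.toLinearMap)ᗮ := by
    rw [stmt19_ker_eq_orth_range_adjoint T, ← hTEP]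
  have hrangeST : LinearMap.range (S ∘L T).toLinearMap = (LinearMap.range T.toLinearMap).map S.toLinearMap := by
    apply le_antisymm
    · rintro _ ⟨x, rfl⟩
      exact ⟨T x, ⟨x, rfl⟩, rfl⟩
    · rintro _ ⟨y, ⟨x, rfl⟩, rfl⟩
      exact ⟨x, rfl⟩
  have hrangeTS : LinearMap.range (T ∘L S).toLinearMap = (LinearMap.range S.toLinearMap).map T.toLinearMap := by
    apply le_antisymm
    · rintro _ ⟨x, rfl⟩
      exact ⟨S x, ⟨x, rfl⟩, rfl⟩
    · rintro _ ⟨y, ⟨x, rfl⟩, rfl⟩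
      exact ⟨x, rfl⟩
  rw [hrangeST, hrangeTS,
    stmt19_map_closed_iff_sup_ker hSclosed hkerS (LinearMap.range T.toLinearMap),
    stmt19_map_closed_iff_sup_ker hTclosed hkerT (LinearMap.range S.toLinearMap),
    hkerS, hkerT]
  constructor
  · intro h
    have h2 := stmt19_orth_sup_closed hTclosed (LinearMap.range S.toLinearMap).isClosed_orthogonal h
    rwa [Submodule.orthogonal_orthogonal, sup_comm] at h2
  · intro h
    have h2 := stmt19_orth_sup_closed hSclosed (LinearMap.range T.toLinearMap).isClosed_orthogonal h
    rwa [Submodule.orthogonal_orthogonal, sup_comm] at h2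
end
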